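/- A finite abelian morphic p-group is homocyclic. -/

import Mathlib

/-- A group is morphic if for every pair of normal subgroups `N₁, N₂`,
`G/N₁ ≅ N₂` holds if and only if `G/N₂ ≅ N₁`. -/
def IsMorphic (G : Type*) [Group G] : Prop :=
  ∀ N₁ N₂ : Subgroup G, ∀ _h₁ : N₁.Normal, ∀ _h₂ : N₂.Normal,
    (Nonempty ((G ⧸ N₁) ≃* N₂) ↔ Nonempty ((G ⧸ N₂) ≃* N₁))

open Multiplicative

/-- The number of solutions of `x ^ p = 1`. -/
private noncomputable def torsionCount (p : ℕ) (H : Type*) [Monoid H] : ℕ := Nat.card {x : H // x ^ p = 1}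

private lemma torsionCount_congr {p : ℕ} {H K : Type*} [Monoid H] [Monoid K] (e : H ≃* K) :
    torsionCount p H = torsionCount p K :=
  Nat.card_congr (e.toEquiv.subtypeEquiv fun x => by
    constructor
    · intro h
      show (e x) ^ p = 1
      rw [← map_pow, h, map_one]
    · intro h
      have h' : e (x ^ p) = e 1 := by rw [map_pow, map_one]; exact h
      exact e.injective h')

private lemma torsionCount_pi {p : ℕ} {ι : Type*} [Fintype ι] (M : ι → Type*)
    [∀ i, Monoid (M i)] :
    torsionCount p (∀ i, M i) = ∏ i, torsionCount p (M i) := by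
  simp only [torsionCount]
  rw [← Nat.card_pi]
  refine Nat.card_congr ⟨fun x i => ⟨x.1 i, ?_⟩, fun y => ⟨fun i => (y i).1, ?_⟩, ?_, ?_⟩
  · have := congrFun x.2 i
    simpa using this
  · funext i
    simpa using (y i).2
  · intro x; apply Subtype.ext; rfl
  · intro y; funext i; apply Subtype.ext; rfl

private lemma quotIff {G H : Type*} [Group G] [Group H] (e : G ≃* H)
    (N₁ N₂ : Subgroup H) (h₁ : N₁.Normal) (h₂ : N₂.Normal) :
    Nonempty ((H ⧸ N₁) ≃* N₂) ↔
      Nonempty ((G ⧸ N₁.comap (e : G →* H)) ≃* N₂.comap (e : G →* H)) := by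
  haveI := h₁; haveI := h₂
  haveI : (N₁.comap (e : G →* H)).Normal := h₁.comap _
  have hm₁ : (N₁.comap (e : G →* H)).map (e : G →* H) = N₁ :=
    Subgroup.map_comap_eq_self_of_surjective e.surjective _
  have hm₂ : (N₂.comap (e : G →* H)).map (e : G →* H) = N₂ :=
    Subgroup.map_comap_eq_self_of_surjective e.surjective _
  have q : (G ⧸ N₁.comap (e : G →* H)) ≃* H ⧸ N₁ := QuotientGroup.congr _ _ e hm₁
  have s : (N₂.comap (e : G →* H)) ≃* N₂ :=
    (e.subgroupMap _).trans (MulEquiv.subgroupCongr hm₂)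
  exact ⟨fun ⟨f⟩ => ⟨q.trans (f.trans s.symm)⟩, fun ⟨f⟩ => ⟨q.symm.trans (f.trans s)⟩⟩

private lemma isMorphic_of_mulEquiv {G H : Type*} [Group G] [Group H] (e : G ≃* H)
    (hG : IsMorphic G) : IsMorphic H := by
  intro N₁ N₂ h₁ h₂
  rw [quotIff e N₁ N₂ h₁ h₂, quotIff e N₂ N₁ h₂ h₁]
  exact hG _ _ (h₁.comap _) (h₂.comap _)

private def mulZModCongr {m k : ℕ} (h : m = k) :
    Multiplicative (ZMod m) ≃* Multiplicative (ZMod k) := by subst h; exact MulEquiv.refl _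

/-- A finite abelian morphic `p`-group is homocyclic, i.e. a direct power of a single
cyclic `p`-group. -/
theorem abelian_morphic_homocyclic (p : ℕ) (hp : p.Prime) (G : Type*) [CommGroup G]
    [Finite G] (hpG : IsPGroup p G) (hG : IsMorphic G) :
    ∃ n e : ℕ, Nonempty (G ≃* (Fin n → Multiplicative (ZMod (p ^ e)))) := by
  classical
  haveI : Fact p.Prime := ⟨hp⟩
  obtain ⟨ι, hι, nn, hnn, ⟨eG⟩⟩ := CommGroup.equiv_prod_multiplicative_zmod_of_finite G
  -- every `nn i` is a power of `p`
  have hcard : ∀ i, nn i ∣ Nat.card G := by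
    intro i
    have hc : Nat.card G = ∏ j, nn j := by
      rw [Nat.card_congr eG.toEquiv, Nat.card_pi]
      exact Finset.prod_congr rfl fun j _ => by
        rw [Nat.card_congr (Multiplicative.toAdd (α := ZMod (nn j))), Nat.card_zmod]
    rw [hc]
    exact Finset.dvd_prod_of_mem _ (Finset.mem_univ i)
  have hpow : ∀ i, ∃ e, nn i = p ^ e := by
    intro i
    obtain ⟨m, hm⟩ := IsPGroup.iff_card.mp hpG
    obtain ⟨e, _, he⟩ := (Nat.dvd_prime_pow hp).mp (hm ▸ hcard i)
    exact ⟨e, he⟩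
  choose E hE using hpow
  have hE1 : ∀ i, 1 ≤ E i := by
    intro i
    by_contra h
    have hE0 : E i = 0 := by omega
    have := hnn i
    rw [hE i, hE0, pow_zero] at this
    omega
  set M : ι → Type := fun i => Multiplicative (ZMod (p ^ E i)) with hM
  have eP : G ≃* ∀ i, M i :=
    eG.trans (MulEquiv.piCongrRight fun i => mulZModCongr (hE i))
  by_cases hhomo : ∀ i j : ι, E i = E j
  · -- homocyclic case
    have hne : ∀ i : ι, Nonempty ι := fun i => ⟨i⟩
    refine ⟨Fintype.card ι, if h : Nonempty ι then E h.some else 0, ⟨eP.trans ?_⟩⟩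
    have hEe : ∀ i, E i = if h : Nonempty ι then E h.some else 0 := by
      intro i
      rw [dif_pos (hne i)]
      exact hhomo i _
    exact MulEquiv.trans
      (MulEquiv.piCongrRight fun i => mulZModCongr (congrArg (p ^ ·) (hEe i)))
      (MulEquiv.mk' (Equiv.arrowCongr (Fintype.equivFin ι) (Equiv.refl _)) fun x y => rfl)
  · -- non-homocyclic: contradiction
    exfalso
    push_neg at hhomo
    obtain ⟨i₁, j₁, hne⟩ := hhomo
    obtain ⟨i₀, j₀, hlt⟩ : ∃ i j : ι, E i < E j := by
      rcases lt_or_gt_of_ne hne with h | h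
      exacts [⟨_, _, h⟩, ⟨_, _, h⟩]
    haveI : NeZero (p ^ E i₀) := ⟨pow_ne_zero _ hp.pos.ne'⟩
    haveI : NeZero (p ^ E j₀) := ⟨pow_ne_zero _ hp.pos.ne'⟩
    have hMorphP : IsMorphic (∀ i, M i) := isMorphic_of_mulEquiv eP hG
    have hdvd : p ^ E i₀ ∣ p ^ E j₀ := pow_dvd_pow p hlt.le
    set c : ZMod (p ^ E j₀) →+ ZMod (p ^ E i₀) :=
      (ZMod.castHom hdvd (ZMod (p ^ E i₀))).toAddMonoidHom with hc
    set π₁ : (∀ i, M i) →* Multiplicative (ZMod (p ^ E i₀)) :=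
      (AddMonoidHom.toMultiplicative c).comp (Pi.evalMonoidHom M j₀) with hπ₁
    have hπ₁s : Function.Surjective π₁ := by
      intro y
      refine ⟨Pi.mulSingle j₀ (ofAdd (((toAdd y).val : ℕ) : ZMod (p ^ E j₀))), ?_⟩
      rw [hπ₁, hc]
      simp only [MonoidHom.coe_comp, Function.comp_apply, Pi.evalMonoidHom_apply,
        Pi.mulSingle_eq_same, AddMonoidHom.coe_toMultiplicative,
        RingHom.toAddMonoidHom_eq_coe, AddMonoidHom.coe_coe, toAdd_ofAdd, map_natCast,
        ZMod.natCast_zmod_val, ofAdd_toAdd]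
    -- key: every p-torsion element lies in ker π₁
    have hker_mem : ∀ x : ∀ i, M i, x ^ p = 1 → x ∈ π₁.ker := by
      intro x hx
      have hx' : (x j₀) ^ p = 1 := by
        have := congrFun hx j₀; simpa using this
      rw [MonoidHom.mem_ker]
      show AddMonoidHom.toMultiplicative c (x j₀) = 1
      show ofAdd (c (toAdd (x j₀))) = 1
      rw [ofAdd_eq_one]
      set y : ZMod (p ^ E j₀) := toAdd (x j₀) with hy
      have h0 : p • y = 0 := by
        rw [← toAdd_pow, hx']; rfl
      have hdv : (p : ℕ) ^ E j₀ ∣ p * y.val := by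
        have h1 : ((p * y.val : ℕ) : ZMod (p ^ E j₀)) = 0 := by
          push_cast
          rw [ZMod.natCast_zmod_val, ← nsmul_eq_mul]
          exact h0
        exact (ZMod.natCast_eq_zero_iff _ _).mp h1
      have hdv2 : p ^ E i₀ ∣ y.val := by
        have h1 : p ^ (E j₀ - 1) ∣ y.val := by
          have h2 : p * p ^ (E j₀ - 1) ∣ p * y.val := by
            have h3 : p * p ^ (E j₀ - 1) = p ^ E j₀ := by
              rw [← pow_succ']
              congr 1
              have := hE1 j₀
              omega
            rwa [h3]
          exact (mul_dvd_mul_iff_left hp.pos.ne').mp h2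
        exact dvd_trans (pow_dvd_pow p (by omega : E i₀ ≤ E j₀ - 1)) h1
      have hcy : c y = ((y.val : ℕ) : ZMod (p ^ E i₀)) := by
        rw [hc]
        simp only [RingHom.toAddMonoidHom_eq_coe, AddMonoidHom.coe_coe, ZMod.castHom_apply]
        rw [← ZMod.natCast_val]
      rw [hcy, ZMod.natCast_eq_zero_iff]
      exact hdv2
    -- the two subgroups
    have hinj : Function.Injective (MonoidHom.mulSingle M i₀) :=
      Pi.mulSingle_injective (M := M) i₀
    have iso1 : ((∀ i, M i) ⧸ π₁.ker) ≃* (MonoidHom.mulSingle M i₀).range :=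
      (QuotientGroup.quotientKerEquivOfSurjective π₁ hπ₁s).trans
        ((MonoidHom.ofInjective hinj).trans (MulEquiv.refl _))
    obtain ⟨ψ⟩ := (hMorphP π₁.ker (MonoidHom.mulSingle M i₀).range
      inferInstance inferInstance).mp ⟨iso1⟩
    -- quotient by N₂
    set ρ : (∀ i, M i) →* (∀ i : {i : ι // i ≠ i₀}, M i.1) :=
      MonoidHom.mk' (fun x i => x i.1) (fun x y => rfl) with hρ
    have hρs : Function.Surjective ρ := by
      intro y
      refine ⟨fun i => if h : i = i₀ then 1 else y ⟨i, h⟩, funext fun i => ?_⟩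
      show (if h : (i : ι) = i₀ then 1 else y ⟨i.1, h⟩) = y i
      rw [dif_neg i.2]
    have hρker : ρ.ker = (MonoidHom.mulSingle M i₀).range := by
      ext x
      rw [MonoidHom.mem_ker]
      constructor
      · intro hx
        refine ⟨x i₀, funext fun i => ?_⟩
        rcases eq_or_ne i i₀ with rfl | h
        · exact Pi.mulSingle_eq_same i (x i)
        · have hx1 : x i = 1 := congrFun hx ⟨i, h⟩
          rw [MonoidHom.mulSingle_apply, Pi.mulSingle_eq_of_ne h, hx1]
      · rintro ⟨y, rfl⟩
        funext i
        show Pi.mulSingle i₀ y i.1 = 1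
        exact Pi.mulSingle_eq_of_ne i.2 y
    have iso2 : ((∀ i, M i) ⧸ (MonoidHom.mulSingle M i₀).range) ≃*
        (∀ i : {i : ι // i ≠ i₀}, M i.1) :=
      (QuotientGroup.quotientMulEquivOfEq hρker.symm).trans
        (QuotientGroup.quotientKerEquivOfSurjective ρ hρs)
    -- counting
    have count1 : torsionCount p ((∀ i, M i) ⧸ (MonoidHom.mulSingle M i₀).range)
        = ∏ i : {i : ι // i ≠ i₀}, torsionCount p (M i.1) := by
      rw [torsionCount_congr iso2, torsionCount_pi]
    have count2 : torsionCount p π₁.ker = ∏ i, torsionCount p (M i) := by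
      rw [← torsionCount_pi]
      refine Nat.card_congr ⟨fun x => ⟨x.1.1, ?_⟩, fun x => ⟨⟨x.1, hker_mem x.1 x.2⟩, ?_⟩, ?_, ?_⟩
      · have := congrArg (Subtype.val) x.2
        simpa using this
      · apply Subtype.ext
        simpa using x.2
      · intro x; apply Subtype.ext; apply Subtype.ext; rfl
      · intro x; apply Subtype.ext; rfl
    have split : ∏ i, torsionCount p (M i)
        = torsionCount p (M i₀) * ∏ i : {i : ι // i ≠ i₀}, torsionCount p (M i.1) := by
      rw [Fintype.prod_eq_mul_prod_compl i₀]
      congr 1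
      exact Finset.prod_subtype _ (fun x => by simp) _
    haveI hfin : ∀ i : ι, Finite (M i) := fun i => inferInstanceAs (Finite (Multiplicative _))
    have hpos : 0 < ∏ i : {i : ι // i ≠ i₀}, torsionCount p (M i.1) := by
      apply Finset.prod_pos
      intro i _
      have : Nonempty {x : M i.1 // x ^ p = 1} := ⟨⟨1, one_pow p⟩⟩
      exact Nat.card_pos
    have heq : torsionCount p (M i₀) * (∏ i : {i : ι // i ≠ i₀}, torsionCount p (M i.1))
        = ∏ i : {i : ι // i ≠ i₀}, torsionCount p (M i.1) := by
      rw [← split, ← count2, ← torsionCount_congr ψ, count1]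
    have ht1 : torsionCount p (M i₀) = 1 :=
      Nat.eq_of_mul_eq_mul_right hpos (by rw [heq, one_mul])
    -- but M i₀ has a nontrivial p-torsion element
    have h2' : p * p ^ (E i₀ - 1) = p ^ E i₀ := by
      rw [← pow_succ']
      congr 1
      have := hE1 i₀
      omega
    have hw : (ofAdd (((p ^ (E i₀ - 1) : ℕ) : ZMod (p ^ E i₀))) : M i₀) ^ p = 1 := by
      rw [← ofAdd_nsmul, nsmul_eq_mul, ← Nat.cast_mul, h2', ZMod.natCast_self]
      rfl
    have hwne : (ofAdd (((p ^ (E i₀ - 1) : ℕ) : ZMod (p ^ E i₀))) : M i₀) ≠ 1 := by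
      rw [Ne, ofAdd_eq_one, ZMod.natCast_eq_zero_iff]
      intro hdvd
      have h5 := (pow_dvd_pow_iff hp.pos.ne' hp.not_isUnit).mp hdvd
      have := hE1 i₀
      omega
    rw [torsionCount, Nat.card_eq_one_iff_unique] at ht1
    haveI := ht1.1
    exact hwne (congrArg Subtype.val (Subsingleton.elim
      (⟨ofAdd (((p ^ (E i₀ - 1) : ℕ) : ZMod (p ^ E i₀))), hw⟩ : {x : M i₀ // x ^ p = 1})
      ⟨1, one_pow p⟩))
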